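/- Let L be a finite modular lattice and S a connected diamond-closed subset of the cover arcs of L. Then for any x, y belonging to arcs of S, S contains a path joining x to y of length exactly d(x,y), the cover-graph distance. -/

import Mathlib

set_option linter.unusedSectionVars false
set_option maxHeartbeats 1000000


def coverGraph (α : Type*) [Lattice α] : SimpleGraph α where
  Adj u v := u ⋖ v ∨ v ⋖ u
  symm := ⟨fun _ _ h => h.elim Or.inr Or.inl⟩
  loopless := ⟨fun _ h => h.elim (fun h' => h'.ne rfl) (fun h' => h'.ne rfl)⟩

def IsDiamond {α : Type*} [PartialOrder α] (a b c d : α) : Prop :=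
  b ≠ c ∧ b ⋖ a ∧ c ⋖ a ∧ d ⋖ b ∧ d ⋖ c

def DiamondClosed {α : Type*} [PartialOrder α] (S : Set (α × α)) : Prop :=
  ∀ a b c d : α, IsDiamond a b c d →
    (((a, b) ∈ S ∧ (a, c) ∈ S) ∨ ((b, d) ∈ S ∧ (c, d) ∈ S)) →
    ((a, b) ∈ S ∧ (a, c) ∈ S ∧ (b, d) ∈ S ∧ (c, d) ∈ S)

/-- A path joining `x` to `y` using the arcs of `S` in either direction. -/
def IsPathIn {α : Type*} (S : Set (α × α)) (x y : α) (l : List α) : Prop :=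
  l.head? = some x ∧ l.getLast? = some y ∧
    l.Chain' (fun u v => (u, v) ∈ S ∨ (v, u) ∈ S)

/-- `x` is a vertex spanned by the arc set `S`. -/
def ArcVertex {α : Type*} (S : Set (α × α)) (x : α) : Prop :=
  ∃ p ∈ S, p.1 = x ∨ p.2 = x

/-- `S` is connected: any two spanned vertices are joined by a path within `S`. -/
def ArcConnected {α : Type*} (S : Set (α × α)) : Prop :=
  ∀ x y, ArcVertex S x → ArcVertex S y → ∃ l, IsPathIn S x y l


namespace CDSP
variable {α : Type*} [Lattice α] [Fintype α]

open Classical in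
noncomputable def below (b : α) : Finset α := Finset.univ.filter (fun a => a < b)

theorem mem_below {a b : α} : a ∈ below b ↔ a < b := by
  classical
  simp [below]

local instance wfLT : WellFoundedRelation α := ⟨(· < ·), (Finite.to_wellFoundedLT).wf⟩

noncomputable def rk (b : α) : ℕ :=
  (below b).attach.sup (fun a => rk a.1 + 1)
termination_by b
decreasing_by exact mem_below.mp a.2

theorem rk_succ_le {a b : α} (h : a < b) : rk a + 1 ≤ rk b := by
  conv_rhs => rw [rk]
  exact Finset.le_sup (f := fun c : {x // x ∈ below b} => rk c.1 + 1)
    (Finset.mem_attach _ ⟨a, mem_below.mpr h⟩)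

theorem rk_lt {a b : α} (h : a < b) : rk a < rk b := rk_succ_le h

theorem rk_le {a b : α} (h : a ≤ b) : rk a ≤ rk b := by
  rcases eq_or_lt_of_le h with rfl | h
  · exact le_rfl
  · exact (rk_lt h).le

theorem exists_covBy_rk {a b : α} (h : a < b) : ∃ c, c ⋖ b ∧ rk b = rk c + 1 := by
  have hne : (below b).attach.Nonempty := ⟨⟨a, mem_below.mpr h⟩, Finset.mem_attach _ _⟩
  obtain ⟨c, _, hc⟩ := Finset.exists_mem_eq_sup (below b).attach hne
    (fun a => rk a.1 + 1)
  have h2 : rk b = rk c.1 + 1 := by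
    conv_lhs => rw [rk]
    exact hc
  refine ⟨c.1, ⟨mem_below.mp c.2, ?_⟩, h2⟩
  intro d hcd hdb
  have h1 : rk d + 1 ≤ rk b := rk_succ_le hdb
  have h3 : rk c.1 < rk d := rk_lt hcd
  omega


section Modular
variable [IsModularLattice α]

theorem inf_covBy_both {u v t : α} (hu : u ⋖ t) (hv : v ⋖ t) (hne : u ≠ v) :
    u ⊓ v ⋖ u ∧ u ⊓ v ⋖ v := by
  have hsup : u ⊔ v = t := by
    rcases hu.eq_or_eq le_sup_left (sup_le hu.le hv.le) with h | h
    · have hvu : v ≤ u := le_sup_right.trans h.le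
      rcases hv.eq_or_eq hvu hu.le with h2 | h2
      · exact absurd h2.symm hne.symm
      · exact absurd h2 hu.lt.ne
    · exact h
  refine ⟨inf_covBy_of_covBy_sup_right ?_, inf_covBy_of_covBy_sup_left ?_⟩
  · rw [hsup]; exact hv
  · rw [hsup]; exact hu

theorem sup_covBy_both {u v m : α} (hu : m ⋖ u) (hv : m ⋖ v) (hne : u ≠ v) :
    u ⋖ u ⊔ v ∧ v ⋖ u ⊔ v := by
  have hinf : u ⊓ v = m := by
    rcases hu.eq_or_eq (le_inf hu.le hv.le) inf_le_left with h | h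
    · exact h
    · have huv : u ≤ v := h.ge.trans inf_le_right
      rcases hv.eq_or_eq hu.le huv with h2 | h2
      · exact absurd h2 hu.lt.ne'
      · exact absurd h2 hne
  refine ⟨covBy_sup_of_inf_covBy_right ?_, covBy_sup_of_inf_covBy_left ?_⟩
  · rw [hinf]; exact hv
  · rw [hinf]; exact hu

theorem inf_covBy_or {a b : α} (h : a ⋖ b) (y : α) :
    a ⊓ y = b ⊓ y ∨ a ⊓ y ⋖ b ⊓ y := by
  by_cases hby : b ⊓ y ≤ a
  · left
    exact le_antisymm (inf_le_inf_right y h.le) (le_inf hby inf_le_right)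
  · right
    have hsup : a ⊔ b ⊓ y = b := by
      rcases h.eq_or_eq le_sup_left (sup_le h.le inf_le_left) with h2 | h2
      · exact absurd (le_sup_right.trans h2.le) hby
      · exact h2
    have hc := inf_covBy_of_covBy_sup_left (a := a) (b := b ⊓ y) (by rw [hsup]; exact h)
    have heq : a ⊓ (b ⊓ y) = a ⊓ y := by rw [← inf_assoc, inf_eq_left.mpr h.le]
    rwa [heq] at hc

theorem rk_covBy : ∀ {b a : α}, a ⋖ b → rk b = rk a + 1 := by
  intro b
  induction b using WellFoundedLT.induction with
  | _ b IH =>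
    intro a hab
    obtain ⟨c, hcb, hrk⟩ := exists_covBy_rk hab.lt
    rcases eq_or_ne a c with rfl | hne
    · exact hrk
    · obtain ⟨h1, h2⟩ := inf_covBy_both hcb hab hne.symm
      have hc2 : rk c = rk (c ⊓ a) + 1 := IH c hcb.lt h1
      have ha2 : rk (c ⊓ a) + 1 ≤ rk a := rk_succ_le h2.lt
      have hb2 : rk a + 1 ≤ rk b := rk_succ_le hab.lt
      omega

end Modular

section Chains
variable {S : Set (α × α)}

/-- Descending chains of arcs of `S`, with length. -/
inductive Down (S : Set (α × α)) : α → α → ℕ → Prop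
  | nil (x : α) : Down S x x 0
  | cons {x y z : α} {n : ℕ} (h : (x, y) ∈ S) (w : Down S y z n) : Down S x z (n + 1)

/-- Walks using arcs of `S` in either direction, with length. -/
inductive SW (S : Set (α × α)) : α → α → ℕ → Prop
  | nil (x : α) : SW S x x 0
  | cons {x y z : α} {n : ℕ} (h : (x, y) ∈ S ∨ (y, x) ∈ S) (w : SW S y z n) : SW S x z (n + 1)

theorem Down.le (hSc : ∀ p ∈ S, p.2 ⋖ p.1) {x z : α} {n : ℕ} (w : Down S x z n) : z ≤ x := by
  induction w with
  | nil => exact le_rfl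
  | cons h _ ih => exact ih.trans (hSc _ h).le

theorem Down.eq_zero {x z : α} (w : Down S x z 0) : x = z := by cases w; rfl

theorem Down.rk_eq [IsModularLattice α] (hSc : ∀ p ∈ S, p.2 ⋖ p.1) {x z : α} {n : ℕ}
    (w : Down S x z n) : rk x = rk z + n := by
  induction w with
  | nil => rfl
  | @cons a b c k h w ih =>
    have hc : b ⋖ a := hSc _ h
    have := rk_covBy hc
    omega

theorem Down.append {x y z : α} {m n : ℕ} (w1 : Down S x y m) (w2 : Down S y z n) :
    Down S x z (m + n) := by
  induction w1 with
  | nil => simpa using w2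
  | cons h _ ih => exact (Nat.succ_add _ _) ▸ Down.cons h (ih w2)

theorem Down.snoc_decomp : ∀ {x z : α} {n : ℕ}, Down S x z (n + 1) →
    ∃ v, Down S x v n ∧ (v, z) ∈ S := by
  intro x z n
  induction n generalizing x with
  | zero =>
    rintro (_ | ⟨h, w⟩)
    obtain rfl := w.eq_zero
    exact ⟨x, Down.nil x, h⟩
  | succ n ih =>
    rintro (_ | ⟨h, w⟩)
    obtain ⟨v, d, hv⟩ := ih w
    exact ⟨v, Down.cons h d, hv⟩

theorem SW.append {x y z : α} {m n : ℕ} (w1 : SW S x y m) (w2 : SW S y z n) :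
    SW S x z (m + n) := by
  induction w1 with
  | nil => simpa using w2
  | cons h _ ih => exact (Nat.succ_add _ _) ▸ SW.cons h (ih w2)

theorem Down.toSW {x z : α} {n : ℕ} (w : Down S x z n) : SW S x z n := by
  induction w with
  | nil => exact SW.nil _
  | cons h _ ih => exact SW.cons (Or.inl h) ih

/-- Reverse a descending chain into an ascending walk. -/
theorem Down.toSWrev {x z : α} {n : ℕ} (w : Down S x z n) : SW S z x n := by
  induction w with
  | nil => exact SW.nil _
  | cons h _ ih => exact (Nat.add_comm 1 _) ▸ ih.append (SW.cons (Or.inr h) (SW.nil _))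

theorem vee_toSW {x y m : α} {p q : ℕ} (w1 : Down S x m p) (w2 : Down S y m q) :
    SW S x y (p + q) := w1.toSW.append w2.toSWrev

theorem SW.toIsPathIn : ∀ {x y : α} {n : ℕ}, SW S x y n →
    ∃ l : List α, IsPathIn S x y l ∧ l.length = n + 1 := by
  intro x y n w
  induction w with
  | nil x => exact ⟨[x], ⟨rfl, rfl, List.isChain_singleton _⟩, rfl⟩
  | @cons x y z n h w ih =>
    obtain ⟨l, ⟨h1, h2, h3⟩, h4⟩ := ih
    match l, h1 with
    | b :: l', h1 =>
      have hb : b = y := by simpa using h1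
      subst hb
      refine ⟨x :: b :: l', ⟨rfl, ?_, ?_⟩, by simpa using h4⟩
      · rw [List.getLast?_cons_cons]
        exact h2
      · exact List.isChain_cons_cons.mpr ⟨h, h3⟩

theorem IsPathIn.toSW : ∀ {l : List α} {x y : α}, IsPathIn S x y l → ∃ n, SW S x y n := by
  intro l
  induction l with
  | nil => intro x y h; simp [IsPathIn] at h
  | cons a l ih =>
    intro x y h
    obtain ⟨h1, h2, h3⟩ := h
    have hax : a = x := by simpa using h1
    subst hax
    match l with
    | [] =>
      have : a = y := by simpa using h2
      exact ⟨0, this ▸ SW.nil a⟩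
    | b :: l' =>
      rw [List.getLast?_cons_cons] at h2
      replace h3 := List.isChain_cons_cons.mp h3
      obtain ⟨n, w⟩ := ih (x := b) (y := y) ⟨rfl, h2, h3.2⟩
      exact ⟨n + 1, SW.cons h3.1 w⟩

end Chains

section Heart
variable [IsModularLattice α] {S : Set (α × α)}
variable (hSc : ∀ p ∈ S, p.2 ⋖ p.1) (hS : DiamondClosed S)
include hSc hS

/-- Absorb an up-step into a descending chain: from `x ⋖ y` and a descending
`S`-chain from `y` to `m`, produce a V between `x` and `m` of total length `≤ p + 1`. -/
theorem absorb_up : ∀ {y m : α} {p : ℕ}, Down S y m p → ∀ {x : α}, (y, x) ∈ S →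
    ∃ m' a b, Down S x m' a ∧ Down S m m' b ∧ a + b ≤ p + 1 := by
  intro y m p w
  induction w with
  | nil y =>
    intro x hxy
    exact ⟨x, 0, 1, Down.nil x, Down.cons hxy (Down.nil x), le_rfl⟩
  | @cons y y1 m p h w ih =>
    intro x hxy
    rcases eq_or_ne y1 x with rfl | hne
    · exact ⟨m, p, 0, w, Down.nil m, by omega⟩
    · have hxcov : x ⋖ y := hSc _ hxy
      have hy1cov : y1 ⋖ y := hSc _ h
      obtain ⟨hc1, hc2⟩ := inf_covBy_both hxcov hy1cov hne.symm
      have hdia : IsDiamond y x y1 (x ⊓ y1) := ⟨hne.symm, hxcov, hy1cov, hc1, hc2⟩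
      obtain ⟨_, _, hxc, hy1c⟩ := hS y x y1 (x ⊓ y1) hdia (Or.inl ⟨hxy, h⟩)
      obtain ⟨m', a, b, d1, d2, hab⟩ := ih hy1c
      exact ⟨m', a + 1, b, Down.cons hxc d1, d2, by omega⟩

/-- Any `S`-walk can be reshaped into a V of no greater length. -/
theorem reshape : ∀ {x y : α} {n : ℕ}, SW S x y n →
    ∃ m p q, Down S x m p ∧ Down S y m q ∧ p + q ≤ n := by
  intro x y n w
  induction w with
  | nil x => exact ⟨x, 0, 0, Down.nil x, Down.nil x, le_rfl⟩
  | @cons x y z n h w ih =>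
    obtain ⟨m, p, q, d1, d2, hpq⟩ := ih
    rcases h with h | h
    · exact ⟨m, p + 1, q, Down.cons h d1, d2, by omega⟩
    · obtain ⟨m', a, b, e1, e2, hab⟩ := absorb_up hSc hS d1 h
      exact ⟨m', a, q + b, e1, d2.append e2, by omega⟩

/-- Sweep a valley along a descending chain. -/
theorem sweep : ∀ {x u : α} {k : ℕ}, Down S x u k → ∀ {v m : α}, u ≠ v →
    (u, m) ∈ S → (v, m) ∈ S →
    (∃ r ≤ k, Down S x v r) ∨
      (∃ w, (w, x) ∈ S ∧ w ≤ x ⊔ v ∧ Down S w v (k + 1)) := by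
  intro x u k w
  induction w with
  | nil u =>
    intro v m hne hu hv
    have hmu : m ⋖ u := hSc _ hu
    have hmv : m ⋖ v := hSc _ hv
    obtain ⟨hcu, hcv⟩ := sup_covBy_both hmu hmv hne
    have hinf : u ⊓ v = m := by
      rcases hmu.eq_or_eq (le_inf hmu.le hmv.le) inf_le_left with h | h
      · exact h
      · have huv : u ≤ v := h.ge.trans inf_le_right
        rcases hmv.eq_or_eq hmu.le huv with h2 | h2
        · exact absurd h2 hmu.lt.ne'
        · exact absurd h2 hne
    have hdia : IsDiamond (u ⊔ v) u v m := ⟨hne, hcu, hcv, hmu, hmv⟩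
    obtain ⟨hwu, hwv, _, _⟩ := hS (u ⊔ v) u v m hdia (Or.inr ⟨hu, hv⟩)
    exact Or.inr ⟨u ⊔ v, hwu, le_rfl, Down.cons hwv (Down.nil v)⟩
  | @cons x x1 u k h w ih =>
    intro v m hne hu hv
    rcases ih hne hu hv with ⟨r, hr, d⟩ | ⟨w1, hw1, hle, d1⟩
    · exact Or.inl ⟨r + 1, by omega, Down.cons h d⟩
    · rcases eq_or_ne w1 x with rfl | hnex
      · exact Or.inl ⟨k + 1, le_rfl, d1⟩
      · have hx1x : x1 ⋖ x := hSc _ h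
        have hx1w1 : x1 ⋖ w1 := hSc _ hw1
        obtain ⟨hcx, hcw⟩ := sup_covBy_both hx1x hx1w1 hnex.symm
        have hdia : IsDiamond (x ⊔ w1) x w1 x1 := ⟨hnex.symm, hcx, hcw, hx1x, hx1w1⟩
        obtain ⟨hWx, hWw, _, _⟩ := hS (x ⊔ w1) x w1 x1 hdia (Or.inr ⟨h, hw1⟩)
        refine Or.inr ⟨x ⊔ w1, hWx, ?_, Down.cons hWw d1⟩
        exact sup_le le_sup_left (hle.trans (sup_le (hx1x.le.trans le_sup_left) le_sup_right))

/-- If the valley of a V lies strictly below `x ⊓ y`, there is a strictly shorter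
`S`-walk from `x` to `y`. -/
theorem descent : ∀ q : ℕ, ∀ {p : ℕ} {x y m : α}, Down S x m p → Down S y m q →
    m < x ⊓ y → ∃ n, n + 2 ≤ p + q ∧ SW S x y n := by
  intro q
  induction q using Nat.strong_induction_on with
  | _ q IH =>
    intro p x y m dx dy hm
    obtain ⟨p', rfl⟩ : ∃ p', p = p' + 1 := by
      cases p with
      | zero =>
        obtain rfl := dx.eq_zero
        exact absurd (hm.trans_le inf_le_left) (lt_irrefl x)
      | succ p' => exact ⟨p', rfl⟩
    obtain ⟨q', rfl⟩ : ∃ q', q = q' + 1 := by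
      cases q with
      | zero =>
        obtain rfl := dy.eq_zero
        exact absurd (hm.trans_le inf_le_right) (lt_irrefl y)
      | succ q' => exact ⟨q', rfl⟩
    obtain ⟨u, dxu, hum⟩ := dx.snoc_decomp
    obtain ⟨v, dyv, hvm⟩ := dy.snoc_decomp
    rcases eq_or_ne u v with rfl | hne
    · exact ⟨p' + q', by omega, vee_toSW dxu dyv⟩
    · rcases sweep hSc hS dxu hne hum hvm with ⟨r, hr, dxv⟩ | ⟨w, hwx, hwle, dwv⟩
      · exact ⟨r + q', by omega, vee_toSW dxv dyv⟩
      · have hvw : v ≤ w := dwv.le hSc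
        have hvy : v ≤ y := dyv.le hSc
        have hmv : m ⋖ v := hSc _ hvm
        have hne2 : v ≠ w ⊓ y := by
          intro heq
          have hxw : x ≤ w := (hSc _ hwx).le
          have h2 : x ⊓ y ≤ v := heq ▸ inf_le_inf hxw le_rfl
          have h3 : x ⊓ y = v := (hmv.eq_or_eq hm.le h2).resolve_left hm.ne'
          have h4 : v ≤ x := h3 ▸ inf_le_left
          have h5 : w ≤ x := hwle.trans (sup_le le_rfl h4)
          exact absurd h5 (hSc _ hwx).lt.not_ge
        have hvlt : v < w ⊓ y := lt_of_le_of_ne (le_inf hvw hvy) hne2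
        obtain ⟨n', hn', sw⟩ := IH q' (by omega) dwv dyv hvlt
        exact ⟨n' + 1, by omega, SW.cons (Or.inr hwx) sw⟩

/-- Main lemma: any pair of `S`-connected vertices is joined by a V through `x ⊓ y`. -/
theorem main : ∀ n : ℕ, ∀ {x y : α}, SW S x y n →
    ∃ p q, Down S x (x ⊓ y) p ∧ Down S y (x ⊓ y) q := by
  intro n
  induction n using Nat.strong_induction_on with
  | _ n IH =>
    intro x y w
    obtain ⟨m, p, q, dx, dy, hpq⟩ := reshape hSc hS w
    rcases eq_or_lt_of_le (le_inf (dx.le hSc) (dy.le hSc)) with heq | hlt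
    · exact ⟨p, q, heq ▸ dx, heq ▸ dy⟩
    · obtain ⟨n', hn', sw⟩ := descent hSc hS _ dx dy hlt
      exact IH n' (by omega) sw

theorem SW.toWalk : ∀ {x y : α} {n : ℕ}, SW S x y n →
    ∃ W : (coverGraph α).Walk x y, W.length = n := by
  intro x y n w
  induction w with
  | nil x => exact ⟨SimpleGraph.Walk.nil, rfl⟩
  | @cons x y z n h w ih =>
    obtain ⟨W, hW⟩ := ih
    have hadj : (coverGraph α).Adj x y := by
      rcases h with h | h
      · exact Or.inr (hSc _ h)
      · exact Or.inl (hSc _ h)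
    exact ⟨SimpleGraph.Walk.cons hadj W, by simp [hW]⟩

end Heart

section Bound
variable [IsModularLattice α]

theorem walk_lb {y : α} : ∀ {z : α} (W : (coverGraph α).Walk z y),
    rk z + rk y ≤ 2 * rk (z ⊓ y) + W.length := by
  intro z W
  induction W with
  | nil => simp only [SimpleGraph.Walk.length_nil, inf_idem]; omega
  | @cons z z' y hadj W ih =>
    simp only [SimpleGraph.Walk.length_cons]
    have hadj' : z ⋖ z' ∨ z' ⋖ z := hadj
    rcases hadj' with h | h
    · have h1 := rk_covBy h
      have h3 : rk (z ⊓ y) ≤ rk (z' ⊓ y) ∧ rk (z' ⊓ y) ≤ rk (z ⊓ y) + 1 := by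
        rcases inf_covBy_or h y with h2 | h2
        · rw [h2]; omega
        · have := rk_covBy h2; omega
      omega
    · have h1 := rk_covBy h
      have h3 : rk (z' ⊓ y) ≤ rk (z ⊓ y) ∧ rk (z ⊓ y) ≤ rk (z' ⊓ y) + 1 := by
        rcases inf_covBy_or h y with h2 | h2
        · rw [h2]; omega
        · have := rk_covBy h2; omega
      omega

end Bound
end CDSP
/-- In a finite modular lattice, a connected diamond-closed set `S` of cover arcs
contains, for any two spanned vertices `x`, `y`, a path joining them of length
exactly the cover-graph distance `d(x,y)`. -/
theorem connected_diamondClosed_short_path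
    {α : Type*} [Lattice α] [Fintype α] [IsModularLattice α]
    (S : Set (α × α)) (hSc : ∀ p ∈ S, p.2 ⋖ p.1)
    (hS : DiamondClosed S) (hconn : ArcConnected S)
    (x y : α) (hx : ArcVertex S x) (hy : ArcVertex S y) :
    ∃ l : List α, IsPathIn S x y l ∧ l.length = (coverGraph α).dist x y + 1 := by
  classical
  obtain ⟨l0, hl0⟩ := hconn x y hx hy
  obtain ⟨n0, w0⟩ := CDSP.IsPathIn.toSW hl0
  obtain ⟨p, q, dx, dy⟩ := CDSP.main hSc hS n0 w0
  have hsw : CDSP.SW S x y (p + q) := CDSP.vee_toSW dx dy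
  obtain ⟨W, hW⟩ := CDSP.SW.toWalk hSc hS hsw
  have hub : (coverGraph α).dist x y ≤ p + q := hW ▸ SimpleGraph.dist_le W
  have hreach : (coverGraph α).Reachable x y := ⟨W⟩
  have hlb : p + q ≤ (coverGraph α).dist x y := by
    obtain ⟨W', hW'⟩ := hreach.exists_walk_length_eq_dist
    have hb := CDSP.walk_lb W'
    have h1 : CDSP.rk x = CDSP.rk (x ⊓ y) + p := dx.rk_eq hSc
    have h2 : CDSP.rk y = CDSP.rk (x ⊓ y) + q := dy.rk_eq hSc
    omega
  obtain ⟨l, hpath, hlen⟩ := CDSP.SW.toIsPathIn hsw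
  refine ⟨l, hpath, by omega⟩
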